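/- Let (X, B) be a (v,b,r,k,1)-BIBD whose blocks are ordered as rows of a b×k array E in which each point occurs exactly r/k times in each column. Fix a row K. Then the number of rows K' ≠ K that share a point with K occurring in different columns of K and K' is exactly r(k−1), and for each such K' the shared point is unique. -/

import Mathlib

open Finset

theorem stmt_10 {X : Type*} [Fintype X] [DecidableEq X] (v b r k : ℕ)
    (hX : Fintype.card X = v)
    (E : Fin b → Fin k → X)
    (hrow : ∀ K : Fin b, Function.Injective (E K))
    (hrep : ∀ x : X, (univ.filter fun K : Fin b => ∃ i, E K i = x).card = r)
    (hcol : ∀ (x : X) (i : Fin k),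
      (univ.filter fun K : Fin b => E K i = x).card * k = r)
    (hpair : ∀ x y : X, x ≠ y →
      (univ.filter fun K : Fin b => (∃ i, E K i = x) ∧ ∃ j, E K j = y).card = 1)
    (K : Fin b) :
    (univ.filter fun K' : Fin b => K' ≠ K ∧
        ∃ (m : X) (i j : Fin k), i ≠ j ∧ E K i = m ∧ E K' j = m).card = r * (k - 1) ∧
      ∀ K' : Fin b, K' ≠ K →
        ∀ m₁ m₂ : X,
          (∃ i j : Fin k, i ≠ j ∧ E K i = m₁ ∧ E K' j = m₁) →
          (∃ i j : Fin k, i ≠ j ∧ E K i = m₂ ∧ E K' j = m₂) → m₁ = m₂ := by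
  -- helper: a card-one pair set forces equality
  have hpair' : ∀ (x y : X), x ≠ y → ∀ A B : Fin b,
      (∃ i, E A i = x) → (∃ j, E A j = y) → (∃ i, E B i = x) → (∃ j, E B j = y) →
      A = B := by
    intro x y hxy A B hAx hAy hBx hBy
    have h1 := hpair x y hxy
    have hA : A ∈ univ.filter fun K : Fin b => (∃ i, E K i = x) ∧ ∃ j, E K j = y := by
      simp only [mem_filter, mem_univ, true_and]; exact ⟨hAx, hAy⟩
    have hB : B ∈ univ.filter fun K : Fin b => (∃ i, E K i = x) ∧ ∃ j, E K j = y := by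
      simp only [mem_filter, mem_univ, true_and]; exact ⟨hBx, hBy⟩
    exact Finset.card_le_one.mp h1.le A hA B hB
  constructor
  · have hTeq : (univ.filter fun K' : Fin b => K' ≠ K ∧
        ∃ (m : X) (i j : Fin k), i ≠ j ∧ E K i = m ∧ E K' j = m)
        = (univ : Finset (Fin k)).biUnion
            (fun i => univ.filter fun K' : Fin b => ∃ j, j ≠ i ∧ E K' j = E K i) := by
      ext K'
      simp only [mem_filter, mem_biUnion, mem_univ, true_and]
      constructor
      · rintro ⟨hne, m, i, j, hij, hKi, hK'j⟩
        exact ⟨i, j, Ne.symm hij, by rw [hK'j, hKi]⟩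
      · rintro ⟨i, j, hji, hEq⟩
        refine ⟨?_, E K i, i, j, Ne.symm hji, rfl, hEq⟩
        rintro rfl
        exact hji (hrow _ hEq)
    rw [hTeq, card_biUnion]
    · have hpiece : ∀ i : Fin k,
          (univ.filter fun K' : Fin b => ∃ j, j ≠ i ∧ E K' j = E K i).card = r - r / k := by
        intro i
        set m := E K i with hm
        have hA : (univ.filter fun K' : Fin b => ∃ j, E K' j = m).card = r := hrep m
        have hB : (univ.filter fun K' : Fin b => E K' i = m).card * k = r := hcol m i
        have hunion : (univ.filter fun K' : Fin b => E K' i = m)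
            ∪ (univ.filter fun K' : Fin b => ∃ j, j ≠ i ∧ E K' j = m)
            = (univ.filter fun K' : Fin b => ∃ j, E K' j = m) := by
          ext K'
          simp only [mem_union, mem_filter, mem_univ, true_and]
          constructor
          · rintro (h | ⟨j, _, h⟩) <;> exact ⟨_, h⟩
          · rintro ⟨j, hj⟩
            by_cases hji : j = i
            · subst hji; exact Or.inl hj
            · exact Or.inr ⟨j, hji, hj⟩
        have hdisj : Disjoint (univ.filter fun K' : Fin b => E K' i = m)
            (univ.filter fun K' : Fin b => ∃ j, j ≠ i ∧ E K' j = m) := by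
          rw [Finset.disjoint_left]
          intro K' h1 h2
          simp only [mem_filter, mem_univ, true_and] at h1 h2
          obtain ⟨j, hji, hj⟩ := h2
          exact hji (hrow K' (hj.trans h1.symm))
        have hcard := Finset.card_union_of_disjoint hdisj
        rw [hunion, hA] at hcard
        have hBdiv : (univ.filter fun K' : Fin b => E K' i = m).card = r / k := by
          rw [← hB, Nat.mul_div_cancel _ i.pos]
        omega
      simp only [hpiece, sum_const, card_univ, Fintype.card_fin, smul_eq_mul]
      rcases Nat.eq_zero_or_pos k with hk | hk
      · simp [hk]
      · obtain ⟨i⟩ : Nonempty (Fin k) := ⟨⟨0, hk⟩⟩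
        have hB := hcol (E K i) i
        have hBdiv : (univ.filter fun K' : Fin b => E K' i = E K i).card = r / k := by
          rw [← hB, Nat.mul_div_cancel _ hk]
        have hdiv : r / k * k = r := by rw [← hBdiv]; exact hB
        have hle : r / k ≤ r := Nat.div_le_self r k
        have hsub : r - r / k = r / k * (k - 1) := by
          rw [Nat.mul_sub, Nat.mul_one, hdiv]
        rw [hsub, show k * (r / k * (k - 1)) = r / k * k * (k - 1) from by ring, hdiv]
    · intro i _ i' _ hii'
      rw [Function.onFun, Finset.disjoint_left]
      intro K' h1 h2
      simp only [mem_filter, mem_univ, true_and] at h1 h2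
      obtain ⟨j, hji, hj⟩ := h1
      obtain ⟨j', hj'i, hj'⟩ := h2
      have hxy : E K i ≠ E K i' := fun h => hii' (hrow K h)
      have hKK' : K = K' := hpair' (E K i) (E K i') hxy K K' ⟨i, rfl⟩ ⟨i', rfl⟩ ⟨j, hj⟩ ⟨j', hj'⟩
      subst hKK'
      exact hji (hrow K hj)
  · rintro K' hne m₁ m₂ ⟨i₁, j₁, h₁, e₁, f₁⟩ ⟨i₂, j₂, h₂, e₂, f₂⟩
    by_contra hm
    exact hne (hpair' m₁ m₂ hm K' K ⟨j₁, f₁⟩ ⟨j₂, f₂⟩ ⟨i₁, e₁⟩ ⟨i₂, e₂⟩)
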